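/- Let A be a subfield of a field B and let T = A + X·B[X]. Then every nonzero prime ideal of T is a maximal ideal. -/

import Mathlib

/-- The polynomial composite `A + X·B[X]`: the subring of `B[X]` of polynomials
whose constant coefficient lies in `A`. -/
def Subring.composite {B : Type*} [CommRing B] (A : Subring B) : Subring (Polynomial B) where
  carrier := {f : Polynomial B | f.coeff 0 ∈ A}
  mul_mem' {f g} hf hg := by
    simp only [Set.mem_setOf_eq, Polynomial.mul_coeff_zero] at *
    exact mul_mem hf hg
  one_mem' := by
    simp only [Set.mem_setOf_eq, Polynomial.coeff_one_zero]
    exact one_mem A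
  add_mem' {f g} hf hg := by
    simp only [Set.mem_setOf_eq, Polynomial.coeff_add] at *
    exact add_mem hf hg
  zero_mem' := by
    simp only [Set.mem_setOf_eq, Polynomial.coeff_zero]
    exact zero_mem A
  neg_mem' {f} hf := by
    simp only [Set.mem_setOf_eq, Polynomial.coeff_neg] at *
    exact neg_mem hf

theorem Subring.mem_composite {B : Type*} [CommRing B] (A : Subring B) (f : Polynomial B) :
    f ∈ A.composite ↔ f.coeff 0 ∈ A := Iff.rfl

open Polynomial in
theorem exists_X_pow_mul {B : Type*} [Field B] (g : B[X]) (hg : g ≠ 0) :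
    ∃ n : ℕ, ∃ u : B[X], g = X ^ n * u ∧ u.coeff 0 ≠ 0 := by
  have H : ∀ d : ℕ, ∀ g : B[X], g ≠ 0 → g.natDegree ≤ d →
      ∃ n : ℕ, ∃ u : B[X], g = X ^ n * u ∧ u.coeff 0 ≠ 0 := by
    intro d
    induction d with
    | zero =>
      intro g hg hd
      refine ⟨0, g, by simp, ?_⟩
      intro h0
      apply hg
      rw [eq_C_of_natDegree_le_zero hd, h0]
      exact C_0
    | succ d ih =>
      intro g hg hd
      by_cases h0 : g.coeff 0 = 0
      · have hX : g = X * g.divX := by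
          conv_lhs => rw [← X_mul_divX_add g]
          rw [h0, map_zero, add_zero]
        have hdne : g.divX ≠ 0 := fun h => hg (by rw [hX, h, mul_zero])
        have hlt : g.divX.natDegree ≤ d := by
          have := natDegree_divX_eq_natDegree_tsub_one (p := g)
          omega
        obtain ⟨n, u, h1, h2⟩ := ih g.divX hdne hlt
        exact ⟨n + 1, u, by rw [hX, h1, pow_succ]; ring, h2⟩
      · exact ⟨0, g, by simp, h0⟩
  exact H g.natDegree g hg le_rfl

set_option maxHeartbeats 1000000 in
set_option synthInstance.maxHeartbeats 400000 in
open Polynomial in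
/-- For `A ⊆ B` fields and `T = A + X·B[X]`, every nonzero prime ideal of `T` is maximal. -/
theorem composite_prime_isMaximal {B : Type*} [Field B] (A : Subfield B)
    (P : Ideal A.toSubring.composite) (hP : P.IsPrime) (hne : P ≠ ⊥) :
    P.IsMaximal := by
  have memT : ∀ p : B[X], p ∈ A.toSubring.composite ↔ p.coeff 0 ∈ A.toSubring :=
    fun p => Iff.rfl
  have hXT : (X : B[X]) ∈ A.toSubring.composite := by
    rw [memT]; simp
  set xT : A.toSubring.composite := ⟨X, hXT⟩ with hxT
  by_cases hXP : xT ∈ P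
  · -- Case 1 : X ∈ P
    let ev : A.toSubring.composite →+* A := {
      toFun := fun f => ⟨(f : B[X]).coeff 0, f.2⟩
      map_one' := by ext; simp
      map_mul' := fun f g => by ext; push_cast; simp
      map_zero' := by ext; simp
      map_add' := fun f g => by ext; push_cast; simp }
    have hsurj : Function.Surjective ev := by
      intro a
      refine ⟨⟨C (a : B), by rw [memT]; simpa using a.2⟩, ?_⟩
      ext; simp [ev]
    have hker : (RingHom.ker ev).IsMaximal := RingHom.ker_isMaximal_of_surjective ev hsurj
    have hle : RingHom.ker ev ≤ P := by
      intro f hf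
      have h0 : (f : B[X]).coeff 0 = 0 := by
        have := congrArg Subtype.val (RingHom.mem_ker.mp hf)
        simpa [ev] using this
      obtain ⟨q, hq⟩ : ∃ q : B[X], (f : B[X]) = X * q := by
        refine ⟨(f : B[X]).divX, ?_⟩
        conv_lhs => rw [← X_mul_divX_add (f : B[X])]
        rw [h0, map_zero, add_zero]
      have hmem : (X * q ^ 2 : B[X]) ∈ A.toSubring.composite := by
        rw [memT]; simp
      have hsq : f * f = xT * ⟨X * q ^ 2, hmem⟩ := by
        apply Subtype.ext
        push_cast
        rw [hq]; ring
      have : f * f ∈ P := hsq ▸ Ideal.mul_mem_right _ _ hXP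
      rcases hP.mem_or_mem this with h | h <;> exact h
    exact hker.eq_of_le hP.ne_top hle ▸ hker
  · -- Case 2 : X ∉ P
    obtain ⟨f0, hf0P, hf0ne⟩ : ∃ f0 ∈ P, f0 ≠ 0 := by
      by_contra h
      push_neg at h
      exact hne ((Submodule.eq_bot_iff P).mpr h)
    have hf0ne' : (f0 : B[X]) ≠ 0 := fun h => hf0ne (Subtype.ext h)
    obtain ⟨n, u, hgu, hu0⟩ := exists_X_pow_mul (f0 : B[X]) hf0ne'
    obtain ⟨f, hfP, hfc⟩ : ∃ f ∈ P, ((f : B[X])).coeff 0 ≠ 0 := by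
      rcases Nat.eq_zero_or_pos n with hn0 | hn0
      · refine ⟨f0, hf0P, ?_⟩
        rw [hgu, hn0]; simpa using hu0
      · set c := u.coeff 0 with hc
        have h1 : (C c * X ^ n : B[X]) ∈ A.toSubring.composite := by
          rw [memT]
          simp only [coeff_C_mul, coeff_X_pow, if_neg hn0.ne, mul_zero]
          exact zero_mem A
        have h2 : (C c⁻¹ * u : B[X]) ∈ A.toSubring.composite := by
          rw [memT]
          simp only [coeff_C_mul, ← hc, inv_mul_cancel₀ hu0]
          exact one_mem A
        have hsplit : f0 = (⟨_, h1⟩ : A.toSubring.composite) * ⟨_, h2⟩ := by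
          apply Subtype.ext
          push_cast
          rw [hgu]
          have : (C c * X ^ n) * (C c⁻¹ * u) = (C c * C c⁻¹) * (X ^ n * u) := by ring
          rw [this, ← map_mul, mul_inv_cancel₀ hu0, map_one, one_mul]
        rcases hP.mem_or_mem (hsplit ▸ hf0P) with h | h
        · exfalso
          have h3 : (C c⁻¹ * X : B[X]) ∈ A.toSubring.composite := by
            rw [memT]; simp
          have hx : ((⟨_, h1⟩ : A.toSubring.composite) * ⟨_, h3⟩) = xT ^ (n + 1) := by
            apply Subtype.ext
            push_cast
            have : (C c * X ^ n) * (C c⁻¹ * X) = (C c * C c⁻¹) * (X ^ (n+1)) := by ring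
            rw [this, ← map_mul, mul_inv_cancel₀ hu0, map_one, one_mul]
          have : xT ^ (n + 1) ∈ P := hx ▸ Ideal.mul_mem_right _ _ h
          exact hXP (hP.mem_of_pow_mem _ this)
        · refine ⟨_, h, ?_⟩
          show (C c⁻¹ * u).coeff 0 ≠ 0
          simp only [coeff_C_mul, ← hc, inv_mul_cancel₀ hu0]
          exact one_ne_zero
    -- x̄ is invertible modulo P
    clear hgu hu0 hf0P hf0ne hf0ne'
    set a : B := (f : B[X]).coeff 0 with ha
    have haA : a ∈ A := f.2
    have hainv : a⁻¹ ∈ A := A.inv_mem haA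
    have hCa : (C a⁻¹ : B[X]) ∈ A.toSubring.composite := by
      rw [memT]; simpa using hainv
    set t : A.toSubring.composite := ⟨C a⁻¹, hCa⟩ * f with hta
    have htP : t ∈ P := Ideal.mul_mem_left _ _ hfP
    have hs0 : ((1 - t : A.toSubring.composite) : B[X]).coeff 0 = 0 := by
      push_cast
      simp [hta, ← ha, inv_mul_cancel₀ hfc]
    obtain ⟨q, hq⟩ : ∃ q : B[X], ((1 - t : A.toSubring.composite) : B[X]) = X * q := by
      refine ⟨((1 - t : A.toSubring.composite) : B[X]).divX, ?_⟩
      conv_lhs => rw [← X_mul_divX_add ((1 - t : A.toSubring.composite) : B[X])]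
      rw [hs0, map_zero, add_zero]
    have hvmem : (X * q ^ 2 : B[X]) ∈ A.toSubring.composite := by
      rw [memT]; simp
    set v : A.toSubring.composite := ⟨X * q ^ 2, hvmem⟩ with hv
    set mkP := Ideal.Quotient.mk P with hmkP
    have hxu : mkP xT * mkP v = 1 := by
      have h1 : xT * v = (1 - t) ^ 2 := by
        apply Subtype.ext
        push_cast at hq ⊢
        rw [hq]; ring
      rw [← map_mul, h1, map_pow, map_sub, map_one,
        Ideal.Quotient.eq_zero_iff_mem.mpr htP, sub_zero, one_pow]
    -- the ring hom ψ : B → T/P,  b ↦ (bX)·v mod P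
    have hbX : ∀ b : B, (C b * X : B[X]) ∈ A.toSubring.composite := by
      intro b; rw [memT]; simp
    let ψ : B →+* (A.toSubring.composite ⧸ P) := {
      toFun := fun b => mkP ⟨C b * X, hbX b⟩ * mkP v
      map_one' := by
        show mkP ⟨C 1 * X, hbX 1⟩ * mkP v = 1
        have h1 : (⟨C 1 * X, hbX 1⟩ : A.toSubring.composite) = xT := by
          apply Subtype.ext; simp; rfl
        rw [h1, hxu]
      map_mul' := fun b c => by
        have key : (⟨C b * X, hbX b⟩ * ⟨C c * X, hbX c⟩ : A.toSubring.composite)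
            = ⟨C (b * c) * X, hbX _⟩ * xT := by
          apply Subtype.ext; push_cast; simp [map_mul]; ring
        show mkP ⟨C (b*c) * X, hbX _⟩ * mkP v
            = (mkP ⟨C b * X, hbX b⟩ * mkP v) * (mkP ⟨C c * X, hbX c⟩ * mkP v)
        have e1 : mkP ⟨C b * X, hbX b⟩ * mkP ⟨C c * X, hbX c⟩
            = mkP ⟨C (b * c) * X, hbX _⟩ * mkP xT := by
          rw [← map_mul, ← map_mul, key]
        rw [mul_mul_mul_comm, e1,
          show (mkP ⟨C (b*c) * X, hbX _⟩ * mkP xT) * (mkP v * mkP v)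
            = mkP ⟨C (b*c) * X, hbX _⟩ * (mkP xT * mkP v) * mkP v from by ring,
          hxu, mul_one]
      map_zero' := by
        show mkP ⟨C 0 * X, hbX 0⟩ * mkP v = 0
        have h1 : (⟨C 0 * X, hbX 0⟩ : A.toSubring.composite) = 0 := by
          apply Subtype.ext; simp
        rw [h1, map_zero, zero_mul]
      map_add' := fun b c => by
        have key : (⟨C (b + c) * X, hbX _⟩ : A.toSubring.composite)
            = ⟨C b * X, hbX b⟩ + ⟨C c * X, hbX c⟩ := by
          apply Subtype.ext; push_cast; simp [map_add]; ring
        show mkP ⟨C (b+c) * X, hbX _⟩ * mkP v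
            = mkP ⟨C b * X, hbX b⟩ * mkP v + mkP ⟨C c * X, hbX c⟩ * mkP v
        rw [key, map_add]; ring }
    let φ : B[X] →+* (A.toSubring.composite ⧸ P) := eval₂RingHom ψ (mkP xT)
    have hφX : φ X = mkP xT := eval₂_X _ _
    have hφC : ∀ b : B, φ (C b) = mkP ⟨C b * X, hbX b⟩ * mkP v := fun b => eval₂_C _ _
    have hXh : ∀ h : B[X], (X * h : B[X]).coeff 0 ∈ A.toSubring := by
      intro h; simp
    -- key lemma : φ h * x̄ = class of X·h
    have L : ∀ h : B[X], φ h * mkP xT = mkP ⟨X * h, hXh h⟩ := by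
      intro h
      induction h using Polynomial.induction_on with
      | C b =>
        rw [hφC b]
        have h1 : (⟨X * C b, hXh _⟩ : A.toSubring.composite) = ⟨C b * X, hbX b⟩ := by
          apply Subtype.ext; push_cast; ring
        calc mkP ⟨C b * X, hbX b⟩ * mkP v * mkP xT
            = mkP ⟨C b * X, hbX b⟩ * (mkP xT * mkP v) := by ring
          _ = mkP ⟨X * C b, hXh _⟩ := by rw [hxu, mul_one, h1]
      | add p r hp hr =>
        have key : (⟨X * (p + r), hXh _⟩ : A.toSubring.composite)
            = ⟨X * p, hXh p⟩ + ⟨X * r, hXh r⟩ := by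
          apply Subtype.ext; push_cast; ring
        rw [map_add, add_mul, hp, hr, key, map_add]
      | monomial m b hm =>
        have h1 : (C b * X ^ (m + 1) : B[X]) = (C b * X ^ m) * X := by ring
        have key : (⟨X * (C b * X ^ m), hXh _⟩ : A.toSubring.composite) * xT
            = ⟨X * (C b * X ^ (m+1)), hXh _⟩ := by
          apply Subtype.ext; push_cast; ring
        rw [h1, map_mul, hφX]
        calc φ (C b * X ^ m) * mkP xT * mkP xT
            = mkP ⟨X * (C b * X ^ m), hXh _⟩ * mkP xT := by rw [hm]
          _ = mkP ⟨X * (C b * X ^ (m+1)), hXh _⟩ := by rw [← map_mul, key]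
          _ = mkP ⟨X * (C b * X ^ m * X), hXh _⟩ := by
              congr 1
              exact Subtype.ext (by push_cast; ring)
    -- φ restricted to T is the quotient map
    have M : ∀ g : A.toSubring.composite, φ (g : B[X]) = mkP g := by
      intro g
      have hCc : (C ((g : B[X]).coeff 0) : B[X]) ∈ A.toSubring.composite := by
        rw [memT]; simp only [coeff_C, if_pos rfl]; exact g.2
      have hXd : (X * (g : B[X]).divX : B[X]).coeff 0 ∈ A.toSubring := hXh _
      have hdecomp : g = ⟨X * (g : B[X]).divX, hXd⟩ + ⟨_, hCc⟩ := by
        apply Subtype.ext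
        push_cast
        rw [X_mul_divX_add]
      have h2 : φ (C ((g : B[X]).coeff 0)) = mkP ⟨_, hCc⟩ := by
        rw [hφC]
        have h3 : (⟨C ((g : B[X]).coeff 0) * X, hbX _⟩ : A.toSubring.composite)
            = ⟨_, hCc⟩ * xT := by
          apply Subtype.ext; push_cast; ring
        rw [h3, map_mul]
        calc mkP ⟨_, hCc⟩ * mkP xT * mkP v = mkP ⟨_, hCc⟩ * (mkP xT * mkP v) := by ring
          _ = mkP ⟨_, hCc⟩ := by rw [hxu, mul_one]
      have h4 : φ (X * (g : B[X]).divX) = mkP ⟨X * (g : B[X]).divX, hXd⟩ := by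
        rw [map_mul, hφX, mul_comm, L ((g : B[X]).divX)]
      have h5 : φ ((g : B[X])) = φ (X * (g : B[X]).divX) + φ (C ((g : B[X]).coeff 0)) := by
        rw [← map_add]
        congr 1
        rw [X_mul_divX_add]
      rw [h5, h4, h2, ← map_add, ← hdecomp]
    -- conclude
    have hsurjφ : Function.Surjective φ := by
      intro y
      obtain ⟨g, rfl⟩ := Ideal.Quotient.mk_surjective y
      exact ⟨g, M g⟩
    have hkerP : (RingHom.ker φ).IsPrime := RingHom.ker_isPrime φ
    have hkerne : RingHom.ker φ ≠ ⊥ := by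
      intro hbot
      have : (f : B[X]) ∈ RingHom.ker φ := by
        rw [RingHom.mem_ker, M f, hmkP, Ideal.Quotient.eq_zero_iff_mem]
        exact hfP
      rw [hbot, Ideal.mem_bot] at this
      exact hfc (by rw [ha, this, coeff_zero])
    haveI := hkerP
    have hkermax : (RingHom.ker φ).IsMaximal := IsPrime.to_maximal_ideal hkerne
    letI : Field (B[X] ⧸ RingHom.ker φ) := Ideal.Quotient.field _
    have e := RingHom.quotientKerEquivOfSurjective hsurjφ
    have hfield : IsField (A.toSubring.composite ⧸ P) :=
      e.symm.toMulEquiv.isField (Field.toIsField _)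
    exact Ideal.Quotient.maximal_of_isField P hfield
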